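/- Let π : Fin I × Fin J → ℝ be strictly positive and fix j ≠ j' in Fin J. Define ν_i = π(i,j)/π(i,j'), ν_n = min_i ν_i, ν_m = max_i ν_i. Let α : Fin I → ℝ satisfy Σ_i π(i,j) α(i) = b_j and Σ_i π(i,j') α(i) = b_{j'} with b_j, b_{j'} > 0. If b_j / b_{j'} ∉ (ν_n, ν_m) (i.e., b_j/b_{j'} ≤ ν_n or b_j/b_{j'} ≥ ν_m), and the ratios ν_i are not all equal, then α(i) < 0 for at least one i, or α is not strictly positive. -/

import Mathlib

theorem boundary_sufficient (I J : ℕ) (hI : (Finset.univ : Finset (Fin I)).Nonempty)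
    (π : Fin I × Fin J → ℝ) (hπ : ∀ p, 0 < π p)
    (j j' : Fin J) (hjj : j ≠ j')
    (α : Fin I → ℝ) (b : Fin J → ℝ)
    (hbj : 0 < b j) (hbj' : 0 < b j')
    (heq1 : ∑ i, π (i, j) * α i = b j)
    (heq2 : ∑ i, π (i, j') * α i = b j')
    (hout : b j / b j' ≤ Finset.univ.inf' hI (fun i => π (i, j) / π (i, j')) ∨
            Finset.univ.sup' hI (fun i => π (i, j) / π (i, j')) ≤ b j / b j')
    (hne : ∃ i i' : Fin I, π (i, j) / π (i, j') ≠ π (i', j) / π (i', j')) :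
    (∃ i, α i < 0) ∨ ¬ (∀ i, 0 < α i) := by
  right
  intro hpos
  set ν : Fin I → ℝ := fun i => π (i, j) / π (i, j') with hν
  set w : Fin I → ℝ := fun i => π (i, j') * α i with hw
  have hwpos : ∀ i, 0 < w i := fun i => mul_pos (hπ _) (hpos i)
  have hsum1 : ∑ i, ν i * w i = b j := by
    rw [← heq1]
    apply Finset.sum_congr rfl
    intro i _
    have h0 : π (i, j') ≠ 0 := (hπ _).ne'
    field_simp [hν, hw]
    simp only [hν, hw]; field_simp
  have hsum2 : ∑ i, w i = b j' := heq2
  obtain ⟨i1, i2, hneq⟩ := hne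
  rcases hout with h | h
  · set m := Finset.univ.inf' hI ν with hm
    have hle : ∀ i, m ≤ ν i := fun i => Finset.inf'_le _ (Finset.mem_univ i)
    have hex : ∃ i0, m < ν i0 := by
      by_contra hc
      push_neg at hc
      have he : ∀ i, ν i = m := fun i => le_antisymm (hc i) (hle i)
      exact hneq (by show ν i1 = ν i2; rw [he i1, he i2])
    obtain ⟨i0, hi0⟩ := hex
    have hlt : m * ∑ i, w i < ∑ i, ν i * w i := by
      rw [Finset.mul_sum]
      apply Finset.sum_lt_sum (fun i _ => mul_le_mul_of_nonneg_right (hle i) (hwpos i).le)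
      exact ⟨i0, Finset.mem_univ i0, by nlinarith [hwpos i0]⟩
    rw [hsum1, hsum2] at hlt
    have h2 : b j ≤ m * b j' := by
      have := (div_le_iff₀ hbj').mp h
      linarith
    linarith
  · set M := Finset.univ.sup' hI ν with hM
    have hle : ∀ i, ν i ≤ M := fun i => Finset.le_sup' _ (Finset.mem_univ i)
    have hex : ∃ i0, ν i0 < M := by
      by_contra hc
      push_neg at hc
      have he : ∀ i, ν i = M := fun i => le_antisymm (hle i) (hc i)
      exact hneq (by show ν i1 = ν i2; rw [he i1, he i2])
    obtain ⟨i0, hi0⟩ := hex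
    have hlt : ∑ i, ν i * w i < M * ∑ i, w i := by
      rw [Finset.mul_sum]
      apply Finset.sum_lt_sum (fun i _ => mul_le_mul_of_nonneg_right (hle i) (hwpos i).le)
      exact ⟨i0, Finset.mem_univ i0, by nlinarith [hwpos i0]⟩
    rw [hsum1, hsum2] at hlt
    have h2 : M * b j' ≤ b j := by
      have := (le_div_iff₀ hbj').mp h
      linarith
    linarith
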